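/- Let H be a separable complex Hilbert space and let F₀ and F₁ be bounded self-adjoint operators on H with F₀² = 1 and F₁² = 1, such that the four eigenspaces ker(F₀ − 1), ker(F₀ + 1), ker(F₁ − 1), ker(F₁ + 1) are all infinite-dimensional. Then there exists a unitary operator U on H with F₀ = U∘F₁∘U*. -/

import Mathlib

set_option linter.unusedSectionVars false
set_option maxHeartbeats 1000000

open Submodule Set

noncomputable section

local notation "⟪" x ", " y "⟫" => @inner ℂ _ _ x y

section AuxSep

/-- An orthonormal set in a separable space is countable. -/
lemma aux_orthonormal_countable {E : Type*} [NormedAddCommGroup E] [InnerProductSpace ℂ E]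
    [TopologicalSpace.SeparableSpace E] {w : Set E}
    (hw : Orthonormal ℂ ((↑) : w → E)) : w.Countable := by
  have hdist : ∀ x ∈ w, ∀ y ∈ w, x ≠ y → (1 : ℝ) ≤ dist x y := by
    intro x hx y hy hxy
    have h0 : ⟪x, y⟫ = 0 := hw.2 (i := ⟨x, hx⟩) (j := ⟨y, hy⟩) (by simpa using hxy)
    have hnx : ‖x‖ = 1 := hw.1 ⟨x, hx⟩
    have hny : ‖y‖ = 1 := hw.1 ⟨y, hy⟩
    have h2 : ‖x - y‖ ^ 2 = 2 := by
      rw [@norm_sub_sq ℂ, h0, hnx, hny]; norm_num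
    rw [dist_eq_norm]
    nlinarith [norm_nonneg (x - y)]
  have : Set.PairwiseDisjoint w (fun x => Metric.ball x (1/2)) := by
    intro x hx y hy hxy
    exact Metric.ball_disjoint_ball (by linarith [hdist x hx y hy hxy])
  exact this.countable_of_isOpen (fun i _ => Metric.isOpen_ball)
    (fun i _ => Metric.nonempty_ball.2 (by norm_num))

/-- A separable infinite-dimensional Hilbert space has a Hilbert basis indexed by ℕ. -/
lemma aux_exists_hilbertBasis_nat (E : Type*) [NormedAddCommGroup E] [InnerProductSpace ℂ E]
    [CompleteSpace E] [TopologicalSpace.SeparableSpace E]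
    (hE : ¬ FiniteDimensional ℂ E) : Nonempty (HilbertBasis ℕ ℂ E) := by
  obtain ⟨w, b, hb⟩ := exists_hilbertBasis ℂ E
  have hbcoe : ⇑b = ((↑) : w → E) := hb
  have horth : Orthonormal ℂ ((↑) : w → E) := hbcoe ▸ b.orthonormal
  have hcount : w.Countable := aux_orthonormal_countable horth
  have hdense : (span ℂ w).topologicalClosure = ⊤ := by
    have := b.dense_span
    rwa [hbcoe, Subtype.range_coe] at this
  have hinf : w.Infinite := by
    by_contra hfin
    rw [Set.not_infinite] at hfin
    haveI : FiniteDimensional ℂ (span ℂ w) := FiniteDimensional.span_of_finite ℂ hfin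
    have hclosed : IsClosed ((span ℂ w : Submodule ℂ E) : Set E) :=
      Submodule.closed_of_finiteDimensional _
    rw [hclosed.submodule_topologicalClosure_eq] at hdense
    exact hE (hdense ▸ (inferInstance : FiniteDimensional ℂ (span ℂ w)) |>.of_injective
      (Submodule.topEquiv : (⊤ : Submodule ℂ E) ≃ₗ[ℂ] E).symm.toLinearMap
      (Submodule.topEquiv.symm.injective))
  haveI : Countable w := hcount.to_subtype
  haveI : Infinite w := hinf.to_subtype
  obtain ⟨d⟩ := nonempty_denumerable (↥w)
  let e : ℕ ≃ w := (Denumerable.eqv w).symm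
  refine ⟨HilbertBasis.mk (horth.comp e e.injective) ?_⟩
  have : Set.range (((↑) : w → E) ∘ e) = w := by
    rw [Set.range_comp, e.range_eq_univ, Set.image_univ, Subtype.range_coe]
  rw [this, hdense]

/-- Two infinite-dimensional separable Hilbert spaces are isometrically isomorphic. -/
lemma aux_iso {E F : Type*} [NormedAddCommGroup E] [InnerProductSpace ℂ E]
    [CompleteSpace E] [TopologicalSpace.SeparableSpace E]
    [NormedAddCommGroup F] [InnerProductSpace ℂ F]
    [CompleteSpace F] [TopologicalSpace.SeparableSpace F]
    (hE : ¬ FiniteDimensional ℂ E) (hF : ¬ FiniteDimensional ℂ F) :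
    Nonempty (E ≃ₗᵢ[ℂ] F) := by
  obtain ⟨bE⟩ := aux_exists_hilbertBasis_nat E hE
  obtain ⟨bF⟩ := aux_exists_hilbertBasis_nat F hF
  exact ⟨bE.repr.trans bF.repr.symm⟩

end AuxSep

section AuxInv
variable {H : Type*} [NormedAddCommGroup H] [InnerProductSpace ℂ H] [CompleteSpace H]

lemma aux_mem_kerp {F : H →L[ℂ] H} {x : H} : x ∈ LinearMap.ker ((F - 1 : H →L[ℂ] H) : H →ₗ[ℂ] H) ↔ F x = x := by
  simp [LinearMap.mem_ker, sub_eq_zero]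

lemma aux_mem_kerm {F : H →L[ℂ] H} {x : H} : x ∈ LinearMap.ker ((F + 1 : H →L[ℂ] H) : H →ₗ[ℂ] H) ↔ F x = -x := by
  rw [LinearMap.mem_ker]
  constructor
  · intro h
    have : F x + x = 0 := by simpa using h
    linear_combination (norm := module) this
  · intro h
    show F x + x = 0
    rw [h]; abel

lemma aux_inner_eigen {F : H →L[ℂ] H} (hF : IsSelfAdjoint F)
    {x y : H} (hx : x ∈ LinearMap.ker ((F - 1 : H →L[ℂ] H) : H →ₗ[ℂ] H)) (hy : y ∈ LinearMap.ker ((F + 1 : H →L[ℂ] H) : H →ₗ[ℂ] H)) :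
    ⟪x, y⟫ = 0 := by
  rw [aux_mem_kerp] at hx
  rw [aux_mem_kerm] at hy
  have h := hF.isSymmetric x y
  simp only [ContinuousLinearMap.coe_coe] at h
  rw [hx, hy, inner_neg_right] at h
  have : (2 : ℂ) * ⟪x, y⟫ = 0 := by linear_combination h
  simpa using this

lemma aux_Fapp {F : H →L[ℂ] H} (hsq : F * F = 1) (x : H) : F (F x) = x := by
  have : (F * F) x = (1 : H →L[ℂ] H) x := by rw [hsq]
  simpa using this

lemma aux_kerm_eq_orth {F : H →L[ℂ] H} (hF : IsSelfAdjoint F) (hsq : F * F = 1) :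
    LinearMap.ker ((F + 1 : H →L[ℂ] H) : H →ₗ[ℂ] H) = (LinearMap.ker ((F - 1 : H →L[ℂ] H) : H →ₗ[ℂ] H))ᗮ := by
  ext y
  constructor
  · intro hy
    rw [Submodule.mem_orthogonal]
    intro x hx
    exact aux_inner_eigen hF hx hy
  · intro hy
    rw [Submodule.mem_orthogonal] at hy
    set yp := ((2 : ℂ)⁻¹) • (y + F y) with hyp_def
    have hyp : yp ∈ LinearMap.ker ((F - 1 : H →L[ℂ] H) : H →ₗ[ℂ] H) := by
      rw [aux_mem_kerp]
      rw [hyp_def]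
      rw [map_smul, map_add, aux_Fapp hsq]
      module
    have hym : y - yp ∈ LinearMap.ker ((F + 1 : H →L[ℂ] H) : H →ₗ[ℂ] H) := by
      rw [aux_mem_kerm]
      rw [map_sub, hyp_def, map_smul, map_add, aux_Fapp hsq]
      module
    have h0 : ⟪yp, y⟫ = 0 := hy yp hyp
    have h1 : ⟪yp, y - yp⟫ = 0 := aux_inner_eigen hF hyp hym
    have h2 : ⟪yp, yp⟫ = 0 := by
      have := inner_sub_right (𝕜 := ℂ) yp y yp
      rw [h0, h1] at this
      linear_combination this
    have hyp0 : yp = 0 := by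
      rwa [inner_self_eq_zero] at h2
    rwa [hyp0, sub_zero] at hym


lemma aux_projp_m {F : H →L[ℂ] H} (hF : IsSelfAdjoint F) (hsq : F * F = 1)
    [CompleteSpace (LinearMap.ker ((F - 1 : H →L[ℂ] H) : H →ₗ[ℂ] H))] {v : H} (hv : v ∈ LinearMap.ker ((F + 1 : H →L[ℂ] H) : H →ₗ[ℂ] H)) :
    orthogonalProjection (LinearMap.ker ((F - 1 : H →L[ℂ] H) : H →ₗ[ℂ] H)) v = 0 := by
  apply orthogonalProjection_mem_subspace_orthogonalComplement_eq_zero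
  rwa [← aux_kerm_eq_orth hF hsq]

lemma aux_mem_orth_m {F : H →L[ℂ] H} (hF : IsSelfAdjoint F)
    {v : H} (hv : v ∈ LinearMap.ker ((F - 1 : H →L[ℂ] H) : H →ₗ[ℂ] H)) : v ∈ (LinearMap.ker ((F + 1 : H →L[ℂ] H) : H →ₗ[ℂ] H))ᗮ := by
  rw [Submodule.mem_orthogonal]
  intro u hu
  rw [← inner_conj_symm, aux_inner_eigen hF hv hu, map_zero]

lemma aux_projm_p {F : H →L[ℂ] H} (hF : IsSelfAdjoint F)
    [CompleteSpace (LinearMap.ker ((F + 1 : H →L[ℂ] H) : H →ₗ[ℂ] H))] {v : H} (hv : v ∈ LinearMap.ker ((F - 1 : H →L[ℂ] H) : H →ₗ[ℂ] H)) :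
    orthogonalProjection (LinearMap.ker ((F + 1 : H →L[ℂ] H) : H →ₗ[ℂ] H)) v = 0 :=
  orthogonalProjection_mem_subspace_orthogonalComplement_eq_zero (aux_mem_orth_m hF hv)

lemma aux_decomp {F : H →L[ℂ] H} (hF : IsSelfAdjoint F) (hsq : F * F = 1)
    [CompleteSpace (LinearMap.ker ((F - 1 : H →L[ℂ] H) : H →ₗ[ℂ] H))] [CompleteSpace (LinearMap.ker ((F + 1 : H →L[ℂ] H) : H →ₗ[ℂ] H))] (x : H) :
    (↑(orthogonalProjection (LinearMap.ker ((F - 1 : H →L[ℂ] H) : H →ₗ[ℂ] H)) x) : H)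
      + ↑(orthogonalProjection (LinearMap.ker ((F + 1 : H →L[ℂ] H) : H →ₗ[ℂ] H)) x) = x := by
  set Pp := orthogonalProjection (LinearMap.ker ((F - 1 : H →L[ℂ] H) : H →ₗ[ℂ] H))
  set Pm := orthogonalProjection (LinearMap.ker ((F + 1 : H →L[ℂ] H) : H →ₗ[ℂ] H))
  have h1 : x - ↑(Pp x) ∈ LinearMap.ker ((F + 1 : H →L[ℂ] H) : H →ₗ[ℂ] H) := by
    rw [aux_kerm_eq_orth hF hsq]
    exact sub_starProjection_mem_orthogonal x
  have h4 : Pm ↑(Pp x) = 0 := aux_projm_p hF (Pp x).2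
  have h5 : Pm x = Pm ↑(Pp x) + Pm (x - ↑(Pp x)) := by
    rw [← map_add]; congr 1; abel
  have h2 : (↑(Pm (x - ↑(Pp x))) : H) = x - ↑(Pp x) := starProjection_eq_self_iff.2 h1
  rw [h5, h4, zero_add, h2]
  abel
end AuxInv

/-- Two self-adjoint involutions on a separable Hilbert space whose `±1`-eigenspaces are
all infinite-dimensional are unitarily equivalent. -/
theorem involutions_unitarily_equivalent
    {H : Type*} [NormedAddCommGroup H] [InnerProductSpace ℂ H] [CompleteSpace H]
    [TopologicalSpace.SeparableSpace H]
    (F₀ F₁ : H →L[ℂ] H)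
    (hF₀ : IsSelfAdjoint F₀) (hF₀sq : F₀ * F₀ = 1)
    (hF₁ : IsSelfAdjoint F₁) (hF₁sq : F₁ * F₁ = 1)
    (h₀p : ¬ FiniteDimensional ℂ ↥(LinearMap.ker ((F₀ - 1 : H →L[ℂ] H) : H →ₗ[ℂ] H)))
    (h₀m : ¬ FiniteDimensional ℂ ↥(LinearMap.ker ((F₀ + 1 : H →L[ℂ] H) : H →ₗ[ℂ] H)))
    (h₁p : ¬ FiniteDimensional ℂ ↥(LinearMap.ker ((F₁ - 1 : H →L[ℂ] H) : H →ₗ[ℂ] H)))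
    (h₁m : ¬ FiniteDimensional ℂ ↥(LinearMap.ker ((F₁ + 1 : H →L[ℂ] H) : H →ₗ[ℂ] H))) :
    ∃ U : H →L[ℂ] H, (star U * U = 1 ∧ U * star U = 1) ∧ F₀ = U * F₁ * star U := by
  haveI : SecondCountableTopology H :=
    UniformSpace.secondCountable_of_separable H
  haveI iKp0 : CompleteSpace (LinearMap.ker ((F₀ - 1 : H →L[ℂ] H) : H →ₗ[ℂ] H)) :=
    (ContinuousLinearMap.isClosed_ker _).completeSpace_coe
  haveI iKm0 : CompleteSpace (LinearMap.ker ((F₀ + 1 : H →L[ℂ] H) : H →ₗ[ℂ] H)) :=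
    (ContinuousLinearMap.isClosed_ker _).completeSpace_coe
  haveI iKp1 : CompleteSpace (LinearMap.ker ((F₁ - 1 : H →L[ℂ] H) : H →ₗ[ℂ] H)) :=
    (ContinuousLinearMap.isClosed_ker _).completeSpace_coe
  haveI iKm1 : CompleteSpace (LinearMap.ker ((F₁ + 1 : H →L[ℂ] H) : H →ₗ[ℂ] H)) :=
    (ContinuousLinearMap.isClosed_ker _).completeSpace_coe
  haveI : TopologicalSpace.SeparableSpace (LinearMap.ker ((F₀ - 1 : H →L[ℂ] H) : H →ₗ[ℂ] H)) :=
    TopologicalSpace.SecondCountableTopology.to_separableSpace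
  haveI : TopologicalSpace.SeparableSpace (LinearMap.ker ((F₀ + 1 : H →L[ℂ] H) : H →ₗ[ℂ] H)) :=
    TopologicalSpace.SecondCountableTopology.to_separableSpace
  haveI : TopologicalSpace.SeparableSpace (LinearMap.ker ((F₁ - 1 : H →L[ℂ] H) : H →ₗ[ℂ] H)) :=
    TopologicalSpace.SecondCountableTopology.to_separableSpace
  haveI : TopologicalSpace.SeparableSpace (LinearMap.ker ((F₁ + 1 : H →L[ℂ] H) : H →ₗ[ℂ] H)) :=
    TopologicalSpace.SecondCountableTopology.to_separableSpace
  obtain ⟨ep⟩ : Nonempty ((LinearMap.ker ((F₁ - 1 : H →L[ℂ] H) : H →ₗ[ℂ] H)) ≃ₗᵢ[ℂ] (LinearMap.ker ((F₀ - 1 : H →L[ℂ] H) : H →ₗ[ℂ] H))) :=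
    aux_iso h₁p h₀p
  obtain ⟨em⟩ : Nonempty ((LinearMap.ker ((F₁ + 1 : H →L[ℂ] H) : H →ₗ[ℂ] H)) ≃ₗᵢ[ℂ] (LinearMap.ker ((F₀ + 1 : H →L[ℂ] H) : H →ₗ[ℂ] H))) :=
    aux_iso h₁m h₀m
  set Pp := orthogonalProjection (LinearMap.ker ((F₁ - 1 : H →L[ℂ] H) : H →ₗ[ℂ] H)) with hPp
  set Pm := orthogonalProjection (LinearMap.ker ((F₁ + 1 : H →L[ℂ] H) : H →ₗ[ℂ] H)) with hPm
  set Qp := orthogonalProjection (LinearMap.ker ((F₀ - 1 : H →L[ℂ] H) : H →ₗ[ℂ] H)) with hQp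
  set Qm := orthogonalProjection (LinearMap.ker ((F₀ + 1 : H →L[ℂ] H) : H →ₗ[ℂ] H)) with hQm
  set U : H →L[ℂ] H :=
    ((LinearMap.ker ((F₀ - 1 : H →L[ℂ] H) : H →ₗ[ℂ] H)).subtypeL.comp
      (ep.toLinearIsometry.toContinuousLinearMap.comp Pp)) +
    ((LinearMap.ker ((F₀ + 1 : H →L[ℂ] H) : H →ₗ[ℂ] H)).subtypeL.comp
      (em.toLinearIsometry.toContinuousLinearMap.comp Pm)) with hUdef
  set V : H →L[ℂ] H :=
    ((LinearMap.ker ((F₁ - 1 : H →L[ℂ] H) : H →ₗ[ℂ] H)).subtypeL.comp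
      (ep.symm.toLinearIsometry.toContinuousLinearMap.comp Qp)) +
    ((LinearMap.ker ((F₁ + 1 : H →L[ℂ] H) : H →ₗ[ℂ] H)).subtypeL.comp
      (em.symm.toLinearIsometry.toContinuousLinearMap.comp Qm)) with hVdef
  have hU : ∀ x : H, U x = ↑(ep (Pp x)) + ↑(em (Pm x)) := by
    intro x
    rw [hUdef]; rfl
  have hV : ∀ x : H, V x = ↑(ep.symm (Qp x)) + ↑(em.symm (Qm x)) := by
    intro x
    rw [hVdef]; rfl
  -- projections applied to eigenvectors
  have hQpU : ∀ x : H, Qp (U x) = ep (Pp x) := by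
    intro x
    rw [hU, map_add, orthogonalProjection_mem_subspace_eq_self,
      aux_projp_m hF₀ hF₀sq (em (Pm x)).2, add_zero]
  have hQmU : ∀ x : H, Qm (U x) = em (Pm x) := by
    intro x
    rw [hU, map_add, orthogonalProjection_mem_subspace_eq_self,
      aux_projm_p hF₀ (ep (Pp x)).2, zero_add]
  have hPpV : ∀ x : H, Pp (V x) = ep.symm (Qp x) := by
    intro x
    rw [hV, map_add, orthogonalProjection_mem_subspace_eq_self,
      aux_projp_m hF₁ hF₁sq (em.symm (Qm x)).2, add_zero]
  have hPmV : ∀ x : H, Pm (V x) = em.symm (Qm x) := by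
    intro x
    rw [hV, map_add, orthogonalProjection_mem_subspace_eq_self,
      aux_projm_p hF₁ (ep.symm (Qp x)).2, zero_add]
  have hVU : V * U = 1 := by
    ext x
    rw [ContinuousLinearMap.mul_apply, ContinuousLinearMap.one_apply, hV, hQpU, hQmU,
      LinearIsometryEquiv.symm_apply_apply, LinearIsometryEquiv.symm_apply_apply]
    exact aux_decomp hF₁ hF₁sq x
  have hUV : U * V = 1 := by
    ext x
    rw [ContinuousLinearMap.mul_apply, ContinuousLinearMap.one_apply, hU, hPpV, hPmV,
      LinearIsometryEquiv.apply_symm_apply, LinearIsometryEquiv.apply_symm_apply]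
    exact aux_decomp hF₀ hF₀sq x
  have hstar : star U = V := by
    rw [ContinuousLinearMap.star_eq_adjoint]
    symm
    rw [ContinuousLinearMap.eq_adjoint_iff]
    intro x y
    -- decompose both sides
    conv_lhs => rw [← aux_decomp hF₁ hF₁sq y]
    conv_rhs => rw [show x = ↑(Qp x) + ↑(Qm x) from (aux_decomp hF₀ hF₀sq x).symm]
    rw [hV, hU]
    rw [inner_add_left, inner_add_left, inner_add_right, inner_add_right,
      inner_add_right, inner_add_right]
    have z1 : ⟪(↑(ep.symm (Qp x)) : H), ↑(Pm y)⟫ = 0 :=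
      aux_inner_eigen hF₁ (ep.symm (Qp x)).2 (Pm y).2
    have z2 : ⟪(↑(em.symm (Qm x)) : H), ↑(Pp y)⟫ = 0 := by
      rw [← inner_conj_symm, aux_inner_eigen hF₁ (Pp y).2 (em.symm (Qm x)).2, map_zero]
    have z3 : ⟪(↑(Qp x) : H), ↑(em (Pm y))⟫ = 0 :=
      aux_inner_eigen hF₀ (Qp x).2 (em (Pm y)).2
    have z4 : ⟪(↑(Qm x) : H), ↑(ep (Pp y))⟫ = 0 := by
      rw [← inner_conj_symm, aux_inner_eigen hF₀ (ep (Pp y)).2 (Qm x).2, map_zero]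
    rw [z1, z2, z3, z4]
    have m1 : ⟪(↑(ep.symm (Qp x)) : H), ↑(Pp y)⟫ = ⟪(↑(Qp x) : H), ↑(ep (Pp y))⟫ := by
      rw [← Submodule.coe_inner, ← Submodule.coe_inner,
        ← ep.inner_map_map (ep.symm (Qp x)) (Pp y), ep.apply_symm_apply]
    have m2 : ⟪(↑(em.symm (Qm x)) : H), ↑(Pm y)⟫ = ⟪(↑(Qm x) : H), ↑(em (Pm y))⟫ := by
      rw [← Submodule.coe_inner, ← Submodule.coe_inner,
        ← em.inner_map_map (em.symm (Qm x)) (Pm y), em.apply_symm_apply]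
    rw [m1, m2]
    try ring
  have hcomm : F₀ * U = U * F₁ := by
    ext x
    rw [ContinuousLinearMap.mul_apply, ContinuousLinearMap.mul_apply]
    have hx : F₁ x = ↑(Pp x) - ↑(Pm x) := by
      conv_lhs => rw [← aux_decomp hF₁ hF₁sq x]
      rw [map_add, aux_mem_kerp.1 (Pp x).2, aux_mem_kerm.1 (Pm x).2]
      try abel
    have hUF : U (F₁ x) = ↑(ep (Pp x)) - ↑(em (Pm x)) := by
      rw [hx, map_sub, hU, hU]
      rw [orthogonalProjection_mem_subspace_eq_self, orthogonalProjection_mem_subspace_eq_self,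
        aux_projp_m hF₁ hF₁sq (Pm x).2, aux_projm_p hF₁ (Pp x).2]
      simp only [map_zero, Submodule.coe_zero, add_zero, zero_add]
    rw [hUF, hU, map_add, aux_mem_kerp.1 (ep (Pp x)).2, aux_mem_kerm.1 (em (Pm x)).2]
    abel
  refine ⟨U, ⟨?_, ?_⟩, ?_⟩
  · rw [hstar]; exact hVU
  · rw [hstar]; exact hUV
  · rw [hstar]
    calc F₀ = F₀ * (U * V) := by rw [hUV, mul_one]
    _ = (F₀ * U) * V := by rw [mul_assoc]
    _ = (U * F₁) * V := by rw [hcomm]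
    _ = U * F₁ * V := rfl
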